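/- In dimension d = 3, let ω̂ : (0,1] → [0,∞) with r²ω̂(r) non-increasing, r³ω̂(r) and r⁵ω̂(r) integrable on (0,1), and ∫₀^1 r³ ω̂(r) dr > 0. Define b(a) = 2π ∫₀^{π/2} sin(2φ) ∫₀^1 r² ω̂(r) sin(r cos(φ) a) dr dφ. Then there is a constant C > 0 depending only on ω̂ such that b(a) ≥ C a for all a ∈ (0, 1). -/

import Mathlib

open MeasureTheory Real Set


lemma auxDeriv1 (φ : ℝ) :
    HasDerivAt (fun x => -(2/3) * Real.cos x ^ 3) (Real.sin (2*φ) * Real.cos φ) φ := by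
  have h1 : HasDerivAt (fun x => Real.cos x ^ 3) ((3:ℕ) * Real.cos φ ^ 2 * (-Real.sin φ)) φ := by
    simpa using (Real.hasDerivAt_cos φ).fun_pow 3
  have := h1.const_mul (-(2/3) : ℝ)
  refine this.congr_deriv ?_
  rw [Real.sin_two_mul]; push_cast; ring

lemma auxDeriv2 (φ : ℝ) :
    HasDerivAt (fun x => -(2/5) * Real.cos x ^ 5) (Real.sin (2*φ) * Real.cos φ ^ 3) φ := by
  have h1 : HasDerivAt (fun x => Real.cos x ^ 5) ((5:ℕ) * Real.cos φ ^ 4 * (-Real.sin φ)) φ := by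
    simpa using (Real.hasDerivAt_cos φ).fun_pow 5
  have := h1.const_mul (-(2/5) : ℝ)
  refine this.congr_deriv ?_
  rw [Real.sin_two_mul]; push_cast; ring

lemma auxJ1 : ∫ φ in Ioo 0 (π/2), Real.sin (2*φ) * Real.cos φ = 2/3 := by
  rw [← integral_Ioc_eq_integral_Ioo,
    ← intervalIntegral.integral_of_le (by positivity : (0:ℝ) ≤ π/2)]
  rw [intervalIntegral.integral_eq_sub_of_hasDerivAt (fun φ _ => auxDeriv1 φ)
    (Continuous.intervalIntegrable (by continuity) _ _)]
  simp [Real.cos_pi_div_two]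

lemma auxJ2 : ∫ φ in Ioo 0 (π/2), Real.sin (2*φ) * Real.cos φ ^ 3 = 2/5 := by
  rw [← integral_Ioc_eq_integral_Ioo,
    ← intervalIntegral.integral_of_le (by positivity : (0:ℝ) ≤ π/2)]
  rw [intervalIntegral.integral_eq_sub_of_hasDerivAt (fun φ _ => auxDeriv2 φ)
    (Continuous.intervalIntegrable (by continuity) _ _)]
  simp [Real.cos_pi_div_two]

theorem stmt8 (ωhat : ℝ → ℝ)
    (hmeas : Measurable ωhat)
    (hnonneg : ∀ r ∈ Ioc (0:ℝ) 1, 0 ≤ ωhat r)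
    (hmono : AntitoneOn (fun r => r ^ 2 * ωhat r) (Ioo 0 1))
    (hint3 : IntegrableOn (fun r => r ^ 3 * ωhat r) (Ioo 0 1))
    (hint5 : IntegrableOn (fun r => r ^ 5 * ωhat r) (Ioo 0 1))
    (hpos : 0 < ∫ r in Ioo (0:ℝ) 1, r ^ 3 * ωhat r) :
    ∃ C : ℝ, 0 < C ∧ ∀ a ∈ Ioo (0:ℝ) 1,
      C * a ≤ 2 * π * ∫ φ in Ioo 0 (π / 2),
        Real.sin (2 * φ) *
          ∫ r in Ioo (0:ℝ) 1, r ^ 2 * ωhat r * Real.sin (r * Real.cos φ * a) := by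
  set I3 := ∫ r in Ioo (0:ℝ) 1, r ^ 3 * ωhat r with hI3def
  set I5 := ∫ r in Ioo (0:ℝ) 1, r ^ 5 * ωhat r with hI5def
  have hω : ∀ r ∈ Ioo (0:ℝ) 1, 0 ≤ ωhat r := fun r hr => hnonneg r ⟨hr.1, hr.2.le⟩
  have hI5nonneg : 0 ≤ I5 := setIntegral_nonneg measurableSet_Ioo (fun r hr =>
    mul_nonneg (pow_nonneg hr.1.le 5) (hω r hr))
  have hI53 : I5 ≤ I3 := by
    apply setIntegral_mono_on hint5 hint3 measurableSet_Ioo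
    intro r hr
    have h1 : r ^ 5 ≤ r ^ 3 := pow_le_pow_of_le_one hr.1.le hr.2.le (by norm_num)
    exact mul_le_mul_of_nonneg_right h1 (hω r hr)
  have hC : 0 < 2 * π * (2 * I3 / 3 - I5 / 10) := by
    have : 0 < 2 * I3 / 3 - I5 / 10 := by linarith
    positivity
  refine ⟨2 * π * (2 * I3 / 3 - I5 / 10), hC, ?_⟩
  rintro a ⟨ha0, ha1⟩
  -- pointwise abs bound
  have habs : ∀ φ : ℝ, ∀ r ∈ Ioo (0:ℝ) 1,
      ‖r ^ 2 * ωhat r * Real.sin (r * Real.cos φ * a)‖ ≤ r ^ 3 * ωhat r := by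
    intro φ r hr
    have hωr := hω r hr
    have h1 : |Real.sin (r * Real.cos φ * a)| ≤ |r * Real.cos φ * a| := Real.abs_sin_le_abs
    have h2 : |r * Real.cos φ * a| ≤ r := by
      rw [abs_mul, abs_mul, abs_of_pos hr.1, abs_of_pos ha0]
      calc r * |Real.cos φ| * a ≤ r * 1 * 1 := by
            apply mul_le_mul (mul_le_mul_of_nonneg_left (Real.abs_cos_le_one φ) hr.1.le)
              ha1.le ha0.le (by linarith [hr.1])
        _ = r := by ring
      
    calc ‖r ^ 2 * ωhat r * Real.sin (r * Real.cos φ * a)‖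
        = r ^ 2 * ωhat r * |Real.sin (r * Real.cos φ * a)| := by
          rw [norm_mul, Real.norm_eq_abs, Real.norm_eq_abs, abs_of_nonneg (by positivity : (0:ℝ) ≤ r^2*ωhat r)]
      _ ≤ r ^ 2 * ωhat r * r := by
          apply mul_le_mul_of_nonneg_left (h1.trans h2) (by positivity)
      _ = r ^ 3 * ωhat r := by ring
  -- inner integrand measurable
  have hFmeas : Measurable (fun p : ℝ × ℝ => p.2 ^ 2 * ωhat p.2 *
      Real.sin (p.2 * Real.cos p.1 * a)) := by
    apply Measurable.mul
    · exact ((measurable_snd.pow_const 2).mul (hmeas.comp measurable_snd))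
    · exact Real.measurable_sin.comp
        ((measurable_snd.mul (Real.measurable_cos.comp measurable_fst)).mul measurable_const)
  have hfint : ∀ φ : ℝ, IntegrableOn
      (fun r => r ^ 2 * ωhat r * Real.sin (r * Real.cos φ * a)) (Ioo 0 1) := by
    intro φ
    apply Integrable.mono' hint3
    · exact (hFmeas.comp (measurable_const.prodMk measurable_id)).aestronglyMeasurable
    · exact (ae_restrict_iff' measurableSet_Ioo).2 (ae_of_all _ (habs φ))
  -- inner lower bound
  have hinner : ∀ φ ∈ Ioo 0 (π/2),
      a * Real.cos φ * I3 - (a * Real.cos φ) ^ 3 / 4 * I5 ≤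
        ∫ r in Ioo (0:ℝ) 1, r ^ 2 * ωhat r * Real.sin (r * Real.cos φ * a) := by
    intro φ hφ
    have hcos : 0 < Real.cos φ := Real.cos_pos_of_mem_Ioo
      ⟨by linarith [hφ.1, Real.pi_pos], hφ.2⟩
    have hcos1 : Real.cos φ ≤ 1 := Real.cos_le_one φ
    have hlow : a * Real.cos φ * I3 - (a * Real.cos φ) ^ 3 / 4 * I5 =
        ∫ r in Ioo (0:ℝ) 1, (a * Real.cos φ * (r ^ 3 * ωhat r) -
          (a * Real.cos φ) ^ 3 / 4 * (r ^ 5 * ωhat r)) := by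
      rw [integral_sub (hint3.const_mul _) (hint5.const_mul _),
        integral_const_mul, integral_const_mul]
    rw [hlow]
    apply setIntegral_mono_on ((hint3.const_mul _).sub (hint5.const_mul _)) (hfint φ)
      measurableSet_Ioo
    intro r hr
    have hωr := hω r hr
    have hx : 0 < r * Real.cos φ * a := mul_pos (mul_pos hr.1 hcos) ha0
    have hx1 : r * Real.cos φ * a ≤ 1 := by
      calc r * Real.cos φ * a ≤ 1 * 1 * 1 := by
            apply mul_le_mul (mul_le_mul hr.2.le hcos1 hcos.le (by norm_num)) ha1.le ha0.le
              (by norm_num)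
        _ = 1 := by norm_num
    have key : r * Real.cos φ * a - (r * Real.cos φ * a) ^ 3 / 4 ≤
        Real.sin (r * Real.cos φ * a) := by
          have := Real.sin_gt_sub_cube hx; nlinarith [pow_pos hx 3]
    have hω2 : (0:ℝ) ≤ r ^ 2 * ωhat r := by positivity
    calc a * Real.cos φ * (r ^ 3 * ωhat r) - (a * Real.cos φ) ^ 3 / 4 * (r ^ 5 * ωhat r)
        = r ^ 2 * ωhat r * (r * Real.cos φ * a - (r * Real.cos φ * a) ^ 3 / 4) := by ring
      _ ≤ r ^ 2 * ωhat r * Real.sin (r * Real.cos φ * a) :=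
          mul_le_mul_of_nonneg_left key hω2
  -- integrability of outer upper function
  have hInner_meas : StronglyMeasurable (fun φ : ℝ =>
      ∫ r in Ioo (0:ℝ) 1, r ^ 2 * ωhat r * Real.sin (r * Real.cos φ * a)) :=
    hFmeas.stronglyMeasurable.integral_prod_right'
  have hInner_bd : ∀ φ : ℝ,
      ‖∫ r in Ioo (0:ℝ) 1, r ^ 2 * ωhat r * Real.sin (r * Real.cos φ * a)‖ ≤ I3 := by
    intro φ
    calc ‖∫ r in Ioo (0:ℝ) 1, r ^ 2 * ωhat r * Real.sin (r * Real.cos φ * a)‖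
        ≤ ∫ r in Ioo (0:ℝ) 1, ‖r ^ 2 * ωhat r * Real.sin (r * Real.cos φ * a)‖ :=
          norm_integral_le_integral_norm _
      _ ≤ I3 := setIntegral_mono_on (hfint φ).norm hint3 measurableSet_Ioo (habs φ)
  have hU_int : IntegrableOn (fun φ => Real.sin (2 * φ) *
      ∫ r in Ioo (0:ℝ) 1, r ^ 2 * ωhat r * Real.sin (r * Real.cos φ * a))
      (Ioo 0 (π/2)) := by
    apply Integrable.mono' (g := fun _ => I3)
      (integrableOn_const measure_Ioo_lt_top.ne)
    · exact ((Real.continuous_sin.comp (continuous_const.mul continuous_id)).stronglyMeasurable.mul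
        hInner_meas).aestronglyMeasurable
    · apply ae_of_all
      intro φ
      rw [norm_mul]
      calc ‖Real.sin (2 * φ)‖ * ‖_‖ ≤ 1 * I3 := by
            apply mul_le_mul (by rw [Real.norm_eq_abs]; exact Real.abs_sin_le_one _)
              (hInner_bd φ) (norm_nonneg _) (by norm_num)
        _ = I3 := one_mul _
  have hL_int : IntegrableOn (fun φ => Real.sin (2 * φ) *
      (a * Real.cos φ * I3 - (a * Real.cos φ) ^ 3 / 4 * I5)) (Ioo 0 (π/2)) := by
    exact (Continuous.integrableOn_Ioc (by fun_prop)).mono_set Ioo_subset_Ioc_self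
  -- outer comparison
  have houter : ∫ φ in Ioo 0 (π/2), Real.sin (2 * φ) *
        (a * Real.cos φ * I3 - (a * Real.cos φ) ^ 3 / 4 * I5) ≤
      ∫ φ in Ioo 0 (π/2), Real.sin (2 * φ) *
        ∫ r in Ioo (0:ℝ) 1, r ^ 2 * ωhat r * Real.sin (r * Real.cos φ * a) := by
    apply setIntegral_mono_on hL_int hU_int measurableSet_Ioo
    intro φ hφ
    have hs : 0 ≤ Real.sin (2 * φ) := Real.sin_nonneg_of_nonneg_of_le_pi
      (by linarith [hφ.1]) (by linarith [hφ.2])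
    exact mul_le_mul_of_nonneg_left (hinner φ hφ) hs
  -- compute lower integral
  have hLval : ∫ φ in Ioo 0 (π/2), Real.sin (2 * φ) *
      (a * Real.cos φ * I3 - (a * Real.cos φ) ^ 3 / 4 * I5) =
      a * I3 * (2/3) - a ^ 3 / 4 * I5 * (2/5) := by
    have : ∀ φ : ℝ, Real.sin (2 * φ) * (a * Real.cos φ * I3 - (a * Real.cos φ) ^ 3 / 4 * I5)
        = (a * I3) * (Real.sin (2 * φ) * Real.cos φ) -
          (a ^ 3 / 4 * I5) * (Real.sin (2 * φ) * Real.cos φ ^ 3) := by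
      intro φ; ring
    simp_rw [this]
    rw [integral_sub, integral_const_mul, integral_const_mul, auxJ1, auxJ2]
    · exact Integrable.const_mul (by exact ((Continuous.integrableOn_Ioc (by fun_prop)).mono_set
        Ioo_subset_Ioc_self)) _
    · exact Integrable.const_mul (by exact ((Continuous.integrableOn_Ioc (by fun_prop)).mono_set
        Ioo_subset_Ioc_self)) _
  -- combine
  rw [hLval] at houter
  have hfinal : (2 * I3 / 3 - I5 / 10) * a ≤ a * I3 * (2/3) - a ^ 3 / 4 * I5 * (2/5) := by
    have ha3 : a ^ 3 ≤ a := by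
      simpa using pow_le_pow_of_le_one ha0.le ha1.le (by norm_num : 1 ≤ 3)
    have := mul_le_mul_of_nonneg_left ha3 hI5nonneg
    linarith
  calc 2 * π * (2 * I3 / 3 - I5 / 10) * a
      = 2 * π * ((2 * I3 / 3 - I5 / 10) * a) := by ring
    _ ≤ 2 * π * (a * I3 * (2/3) - a ^ 3 / 4 * I5 * (2/5)) := by
        apply mul_le_mul_of_nonneg_left hfinal (by positivity)
    _ ≤ 2 * π * _ := mul_le_mul_of_nonneg_left houter (by positivity)
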